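/- In the noisy ordered pairwise comparison model with parameters k ∈ ℕ and p ∈ [0, 1], the variance of S = X_i − X_j equals kp(1 − p)(3 + 4p²). -/

import Mathlib

open MeasureTheory ProbabilityTheory

/-- The joint distribution of the follower counts `(X_i, X_j)` of the higher-quality
creator `CC_i` and the lower-quality creator `CC_j` in the noisy ordered pairwise
comparison model with group size `k` and signal `p ∈ [0, 1]`:
draw `x ~ Binomial(k, p)` (followers of `CC_i` from the `(i, j)` group at step 1);
independently draw `b₁ ~ Binomial(k, p)`, `b₂ ~ Binomial(k, p)`, `c ~ Binomial(x, 1 − p)`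
and `d ~ Binomial(k − x, p)`; set `X_i = b₁ + x` and `X_j = b₂ + c + d`. -/
noncomputable def noisyPair (k : ℕ) (p : ℝ) (hp0 : 0 ≤ p) (hp1 : p ≤ 1) : PMF (ℕ × ℕ) :=
  (PMF.binomial (Real.toNNReal p) (Real.toNNReal_le_one.mpr hp1) k).bind fun x =>
  (PMF.binomial (Real.toNNReal p) (Real.toNNReal_le_one.mpr hp1) k).bind fun b₁ =>
  (PMF.binomial (Real.toNNReal p) (Real.toNNReal_le_one.mpr hp1) k).bind fun b₂ =>
  (PMF.binomial (1 - Real.toNNReal p) tsub_le_self (x : ℕ)).bind fun c =>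
  (PMF.binomial (Real.toNNReal p) (Real.toNNReal_le_one.mpr hp1) (k - (x : ℕ))).map fun d =>
  ((b₁ : ℕ) + (x : ℕ), (b₂ : ℕ) + (c : ℕ) + (d : ℕ))

/-- real binomial weight -/
noncomputable def w (q : ℝ) (n i : ℕ) : ℝ := (n.choose i : ℝ) * q ^ i * (1 - q) ^ (n - i)

lemma binomial_toReal (p' : NNReal) (h : p' ≤ 1) (n : ℕ) (i : Fin (n + 1)) :
    ((PMF.binomial p' h n) i).toReal = w (p' : ℝ) n (i : ℕ) := by
  rw [PMF.binomial_apply, Fin.val_last, w]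
  have h1 : (1 - (p' : ENNReal)).toReal = 1 - (p' : ℝ) := by
    rw [ENNReal.toReal_sub_of_le (ENNReal.coe_le_one_iff.mpr h) ENNReal.one_ne_top]; simp
  simp [NNReal.coe_sub h, h1]
  ring

lemma sumW (q : ℝ) (n : ℕ) : ∑ i ∈ Finset.range (n + 1), w q n i = 1 := by
  have := add_pow q (1 - q) n
  simp only [add_sub_cancel, one_pow] at this
  rw [Finset.sum_congr rfl fun i (hi : i ∈ Finset.range (n+1)) =>
    (by rw [w]; ring : w q n i = q ^ i * (1 - q) ^ (n - i) * (n.choose i : ℝ)), ← this]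

lemma sumW1 (q : ℝ) (n : ℕ) :
    ∑ i ∈ Finset.range (n + 1), w q n i * (i : ℝ) = n * q := by
  cases n with
  | zero => simp [w]
  | succ m =>
    rw [Finset.sum_range_succ']
    simp only [Nat.cast_zero, mul_zero, add_zero]
    have key : ∀ i ∈ Finset.range (m + 1),
        w q (m + 1) (i + 1) * ((i + 1 : ℕ) : ℝ) = ((m + 1 : ℕ) : ℝ) * q * w q m i := by
      intro i hi
      rw [Finset.mem_range] at hi
      have hc : ((i + 1) * (m + 1).choose (i + 1) : ℕ) = ((m + 1) * m.choose i : ℕ) := by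
        rw [mul_comm (i + 1), ← Nat.add_one_mul_choose_eq]
      simp only [w]
      have h2 : (m + 1) - (i + 1) = m - i := by omega
      rw [h2]
      push_cast
      have hc' : ((i : ℝ) + 1) * ((m + 1).choose (i + 1) : ℝ) = ((m : ℝ) + 1) * (m.choose i : ℝ) := by
        exact_mod_cast congrArg (Nat.cast (R := ℝ)) hc
      calc ((m + 1).choose (i + 1) : ℝ) * q ^ (i + 1) * (1 - q) ^ (m - i) * ((i : ℝ) + 1)
          = (((i : ℝ) + 1) * ((m + 1).choose (i + 1) : ℝ)) * (q ^ (i + 1) * (1 - q) ^ (m - i)) := by ring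
        _ = (((m : ℝ) + 1) * (m.choose i : ℝ)) * (q ^ (i + 1) * (1 - q) ^ (m - i)) := by rw [hc']
        _ = ((m : ℝ) + 1) * q * ((m.choose i : ℝ) * q ^ i * (1 - q) ^ (m - i)) := by ring
    rw [Finset.sum_congr rfl key, ← Finset.mul_sum, sumW]
    push_cast; ring

lemma sumW2' (q : ℝ) (n : ℕ) :
    ∑ i ∈ Finset.range (n + 1), w q n i * (i : ℝ) * ((i : ℝ) - 1)
      = n * (n - 1) * q ^ 2 := by
  match n with
  | 0 => simp [w]
  | 1 => norm_num [Finset.sum_range_succ, w]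
  | (m + 2) =>
    rw [Finset.sum_range_succ', Finset.sum_range_succ']
    simp only [Nat.cast_zero, Nat.cast_one, mul_zero, zero_mul, add_zero, sub_self, mul_one]
    norm_num
    have key : ∀ i ∈ Finset.range (m + 1),
        w q (m + 2) (i + 1 + 1) * ((i : ℝ) + 1 + 1) * ((i : ℝ) + 1)
          = ((m + 2 : ℕ) : ℝ) * ((m + 1 : ℕ) : ℝ) * q ^ 2 * w q m i := by
      intro i hi
      rw [Finset.mem_range] at hi
      have hc1 : (m + 2).choose (i + 2) * (i + 2) = (m + 2) * ((m + 1).choose (i + 1)) := by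
        have h : (m + 2) * (m + 1).choose (i + 1) = (m + 2).choose (i + 2) * (i + 2) :=
          Nat.add_one_mul_choose_eq (m + 1) (i + 1)
        omega
      have hc2 : (m + 1).choose (i + 1) * (i + 1) = (m + 1) * (m.choose i) := by
        have h : (m + 1) * m.choose i = (m + 1).choose (i + 1) * (i + 1) :=
          Nat.add_one_mul_choose_eq m i
        omega
      have hc : (m + 2).choose (i + 2) * (i + 2) * (i + 1) = (m + 2) * (m + 1) * (m.choose i) := by
        rw [hc1, Nat.mul_assoc, hc2]; ring
      have hc' : ((m + 2).choose (i + 2) : ℝ) * ((i : ℝ) + 2) * ((i : ℝ) + 1)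
          = ((m : ℝ) + 2) * ((m : ℝ) + 1) * (m.choose i : ℝ) := by
        exact_mod_cast congrArg (Nat.cast (R := ℝ)) hc
      simp only [w]
      have h2 : (m + 2) - (i + 1 + 1) = m - i := by omega
      rw [h2]
      push_cast
      calc ((m + 2).choose (i + 2) : ℝ) * q ^ (i + 2) * (1 - q) ^ (m - i) * ((i : ℝ) + 1 + 1) * ((i : ℝ) + 1)
          = (((m + 2).choose (i + 2) : ℝ) * ((i : ℝ) + 2) * ((i : ℝ) + 1)) * (q ^ (i + 2) * (1 - q) ^ (m - i)) := by ring
        _ = (((m : ℝ) + 2) * ((m : ℝ) + 1) * (m.choose i : ℝ)) * (q ^ (i + 2) * (1 - q) ^ (m - i)) := by rw [hc']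
        _ = ((m : ℝ) + 2) * ((m : ℝ) + 1) * q ^ 2 * ((m.choose i : ℝ) * q ^ i * (1 - q) ^ (m - i)) := by ring
    rw [Finset.sum_congr rfl key, ← Finset.mul_sum, sumW]
    push_cast; ring

lemma sumW2 (q : ℝ) (n : ℕ) :
    ∑ i ∈ Finset.range (n + 1), w q n i * (i : ℝ) ^ 2
      = n * q * (1 - q) + (n * q) ^ 2 := by
  have h : ∀ i ∈ Finset.range (n + 1),
      w q n i * (i : ℝ) ^ 2 = w q n i * (i : ℝ) * ((i : ℝ) - 1) + w q n i * (i : ℝ) := by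
    intro i _; ring
  rw [Finset.sum_congr rfl h, Finset.sum_add_distrib, sumW2', sumW1]
  ring

/-- mean step over `Fin (n+1)` -/
lemma step1 (q t s : ℝ) (n : ℕ) :
    ∑ i : Fin (n + 1), w q n (i : ℕ) * (t + s * (i : ℕ)) = t + s * (n * q) := by
  rw [Fin.sum_univ_eq_sum_range (fun i => w q n i * (t + s * i))]
  have h : ∀ i ∈ Finset.range (n + 1),
      w q n i * (t + s * (i : ℝ)) = t * w q n i + s * (w q n i * (i : ℝ)) := by
    intro i _; ring
  rw [Finset.sum_congr rfl h, Finset.sum_add_distrib, ← Finset.mul_sum, ← Finset.mul_sum,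
    sumW, sumW1]
  ring

/-- second-moment step over `Fin (n+1)` -/
lemma step2 (q t s : ℝ) (n : ℕ) :
    ∑ i : Fin (n + 1), w q n (i : ℕ) * (t + s * (i : ℕ)) ^ 2
      = (t + s * (n * q)) ^ 2 + s ^ 2 * (n * q * (1 - q)) := by
  rw [Fin.sum_univ_eq_sum_range (fun i => w q n i * (t + s * i) ^ 2)]
  have h : ∀ i ∈ Finset.range (n + 1),
      w q n i * (t + s * (i : ℝ)) ^ 2
        = t ^ 2 * w q n i + 2 * t * s * (w q n i * (i : ℝ)) + s ^ 2 * (w q n i * (i : ℝ) ^ 2) := by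
    intro i _; ring
  rw [Finset.sum_congr rfl h, Finset.sum_add_distrib, Finset.sum_add_distrib,
    ← Finset.mul_sum, ← Finset.mul_sum, ← Finset.mul_sum, sumW, sumW1, sumW2]
  ring

lemma integral_bind_eq_sum {α β : Type*} [Fintype α] [Fintype β]
    [MeasurableSpace β] [MeasurableSingletonClass β]
    (P : PMF α) (f : α → PMF β) (g : β → ℝ) :
    ∫ b, g b ∂((P.bind f).toMeasure) = ∑ a, (P a).toReal * ∫ b, g b ∂((f a).toMeasure) := by
  simp only [PMF.integral_eq_sum, smul_eq_mul, PMF.bind_apply, tsum_fintype]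
  have h1 : ∀ b, ((∑ a, P a * f a b).toReal) * g b
      = ∑ a, (P a).toReal * (f a b).toReal * g b := by
    intro b
    rw [ENNReal.toReal_sum (fun a _ =>
      ENNReal.mul_ne_top (PMF.apply_ne_top P a) (PMF.apply_ne_top (f a) b)), Finset.sum_mul]
    exact Finset.sum_congr rfl fun a _ => by rw [ENNReal.toReal_mul]
  rw [Finset.sum_congr rfl fun b _ => h1 b, Finset.sum_comm]
  refine Finset.sum_congr rfl fun a _ => ?_
  rw [Finset.mul_sum]
  exact Finset.sum_congr rfl fun b _ => by ring

lemma integral_pure_eq {β : Type*} [Fintype β] [MeasurableSpace β] [MeasurableSingletonClass β]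
    (b₀ : β) (g : β → ℝ) : ∫ b, g b ∂((PMF.pure b₀ : PMF β).toMeasure) = g b₀ := by
  rw [PMF.toMeasure_pure, integral_dirac]

lemma variance_map' {α β : Type*} [MeasurableSpace α] [MeasurableSpace β]
    (μ : Measure α) (φ : α → β) (X : β → ℝ) (hφ : Measurable φ) (hX : Measurable X) :
    variance X (μ.map φ) = variance (X ∘ φ) μ := by
  rw [variance, variance, evariance, evariance,
    integral_map hφ.aemeasurable hX.aestronglyMeasurable,
    lintegral_map (by measurability) hφ]
  rfl

lemma memL2_of_finite {α : Type*} [Fintype α] [MeasurableSpace α] [MeasurableSingletonClass α]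
    (μ : Measure α) [IsFiniteMeasure μ] (f : α → ℝ) : MemLp f 2 μ := by
  obtain ⟨C, hC⟩ := Finite.exists_le (fun a => ‖f a‖)
  exact (memLp_top_of_bound AEStronglyMeasurable.of_discrete C
    (Filter.Eventually.of_forall hC)).mono_exponent le_top

/-- underlying finite sample space -/
@[reducible] def Omega (k : ℕ) : Type :=
  Σ x : Fin (k + 1), Fin (k + 1) × Fin (k + 1) × Fin ((x : ℕ) + 1) × Fin (k - (x : ℕ) + 1)

instance (k : ℕ) : Fintype (Omega k) := by unfold Omega; infer_instance
instance (k : ℕ) : MeasurableSpace (Omega k) := ⊤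
instance (k : ℕ) : MeasurableSingletonClass (Omega k) := ⟨fun _ => trivial⟩

noncomputable def Pk (k : ℕ) (p : ℝ) (hp1 : p ≤ 1) : PMF (Omega k) :=
  (PMF.binomial (Real.toNNReal p) (Real.toNNReal_le_one.mpr hp1) k).bind fun x =>
  (PMF.binomial (Real.toNNReal p) (Real.toNNReal_le_one.mpr hp1) k).bind fun b₁ =>
  (PMF.binomial (Real.toNNReal p) (Real.toNNReal_le_one.mpr hp1) k).bind fun b₂ =>
  (PMF.binomial (1 - Real.toNNReal p) tsub_le_self (x : ℕ)).bind fun c =>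
  (PMF.binomial (Real.toNNReal p) (Real.toNNReal_le_one.mpr hp1) (k - (x : ℕ))).map fun d =>
  (⟨x, b₁, b₂, c, d⟩ : Omega k)

def phi (k : ℕ) : Omega k → ℕ × ℕ := fun ω =>
  ((ω.2.1 : ℕ) + (ω.1 : ℕ), (ω.2.2.1 : ℕ) + (ω.2.2.2.1 : ℕ) + (ω.2.2.2.2 : ℕ))

lemma noisy_eq (k : ℕ) (p : ℝ) (hp0 : 0 ≤ p) (hp1 : p ≤ 1) :
    noisyPair k p hp0 hp1 = (Pk k p hp1).map (phi k) := by
  simp only [noisyPair, Pk, PMF.map_bind, PMF.map_comp, PMF.map, bind_pure_comp,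
    PMF.bind_bind, PMF.pure_bind, PMF.monad_map_eq_map, Function.comp_def]
  rfl

lemma exp_Pk (k : ℕ) (p : ℝ) (hp1 : p ≤ 1) (g : Omega k → ℝ) :
    ∫ ω, g ω ∂((Pk k p hp1).toMeasure)
      = ∑ x : Fin (k + 1),
          ((PMF.binomial (Real.toNNReal p) (Real.toNNReal_le_one.mpr hp1) k) x).toReal *
        ∑ b₁ : Fin (k + 1),
          ((PMF.binomial (Real.toNNReal p) (Real.toNNReal_le_one.mpr hp1) k) b₁).toReal *
        ∑ b₂ : Fin (k + 1),
          ((PMF.binomial (Real.toNNReal p) (Real.toNNReal_le_one.mpr hp1) k) b₂).toReal *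
        ∑ c : Fin ((x : ℕ) + 1),
          ((PMF.binomial (1 - Real.toNNReal p) tsub_le_self (x : ℕ)) c).toReal *
        ∑ d : Fin (k - (x : ℕ) + 1),
          ((PMF.binomial (Real.toNNReal p) (Real.toNNReal_le_one.mpr hp1) (k - (x : ℕ))) d).toReal *
            g ⟨x, b₁, b₂, c, d⟩ := by
  rw [Pk, integral_bind_eq_sum]
  refine Finset.sum_congr rfl fun x _ => ?_
  rw [integral_bind_eq_sum]
  refine congrArg _ (Finset.sum_congr rfl fun b₁ _ => ?_)
  rw [integral_bind_eq_sum]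
  refine congrArg _ (Finset.sum_congr rfl fun b₂ _ => ?_)
  rw [integral_bind_eq_sum]
  refine congrArg _ (Finset.sum_congr rfl fun c _ => ?_)
  rw [show (PMF.binomial (Real.toNNReal p) (Real.toNNReal_le_one.mpr hp1) (k - (x : ℕ))).map
      (fun d => (⟨x, b₁, b₂, c, d⟩ : Omega k))
    = (PMF.binomial (Real.toNNReal p) (Real.toNNReal_le_one.mpr hp1) (k - (x : ℕ))).bind
      (fun d => PMF.pure (⟨x, b₁, b₂, c, d⟩ : Omega k)) from rfl, integral_bind_eq_sum]
  refine congrArg _ (Finset.sum_congr rfl fun d _ => ?_)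
  rw [integral_pure_eq]

lemma sumWFin (q : ℝ) (n : ℕ) : ∑ i : Fin (n + 1), w q n (i : ℕ) = 1 := by
  rw [Fin.sum_univ_eq_sum_range (fun i => w q n i)]; exact sumW q n

lemma step2' (q t s V : ℝ) (n : ℕ) :
    ∑ i : Fin (n + 1), w q n (i : ℕ) * ((t + s * (i : ℕ)) ^ 2 + V)
      = (t + s * (n * q)) ^ 2 + s ^ 2 * (n * q * (1 - q)) + V := by
  have h : ∀ i : Fin (n + 1), w q n (i : ℕ) * ((t + s * (i : ℕ)) ^ 2 + V)
      = w q n (i : ℕ) * (t + s * (i : ℕ)) ^ 2 + V * w q n (i : ℕ) := fun i => by ring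
  rw [Finset.sum_congr rfl (fun i _ => h i), Finset.sum_add_distrib, step2,
    ← Finset.mul_sum, sumWFin]
  ring

lemma E1calc (k : ℕ) (p : ℝ) :
    (∑ x : Fin (k + 1), w p k (x : ℕ) *
     ∑ b₁ : Fin (k + 1), w p k (b₁ : ℕ) *
     ∑ b₂ : Fin (k + 1), w p k (b₂ : ℕ) *
     ∑ c : Fin ((x : ℕ) + 1), w (1 - p) (x : ℕ) (c : ℕ) *
     ∑ d : Fin (k - (x : ℕ) + 1), w p (k - (x : ℕ)) (d : ℕ) *
       ((((b₁ : ℕ) + (x : ℕ) : ℕ) : ℝ) - (((b₂ : ℕ) + (c : ℕ) + (d : ℕ) : ℕ) : ℝ)))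
      = k * p * (2 * p - 1) := by
  have hd : ∀ (x b₁ b₂ : Fin (k + 1)) (c : Fin ((x : ℕ) + 1)),
      (∑ d : Fin (k - (x : ℕ) + 1), w p (k - (x : ℕ)) (d : ℕ) *
        ((((b₁ : ℕ) + (x : ℕ) : ℕ) : ℝ) - (((b₂ : ℕ) + (c : ℕ) + (d : ℕ) : ℕ) : ℝ)))
      = ((b₁ : ℕ) : ℝ) + ((x : ℕ) : ℝ) - ((b₂ : ℕ) : ℝ) - ((c : ℕ) : ℝ)
          - ((k - (x : ℕ) : ℕ) : ℝ) * p := by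
    intro x b₁ b₂ c
    calc _ = (((b₁ : ℕ) : ℝ) + ((x : ℕ) : ℝ) - ((b₂ : ℕ) : ℝ) - ((c : ℕ) : ℝ))
          + (-1) * (((k - (x : ℕ) : ℕ) : ℝ) * p) := by
            rw [← step1 p _ (-1) (k - (x : ℕ))]
            exact Finset.sum_congr rfl fun d _ => by push_cast; ring
      _ = _ := by ring
  have hc : ∀ (x b₁ b₂ : Fin (k + 1)),
      (∑ c : Fin ((x : ℕ) + 1), w (1 - p) (x : ℕ) (c : ℕ) *
        (((b₁ : ℕ) : ℝ) + ((x : ℕ) : ℝ) - ((b₂ : ℕ) : ℝ) - ((c : ℕ) : ℝ)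
          - ((k - (x : ℕ) : ℕ) : ℝ) * p))
      = ((b₁ : ℕ) : ℝ) + ((x : ℕ) : ℝ) - ((b₂ : ℕ) : ℝ)
          - ((k - (x : ℕ) : ℕ) : ℝ) * p - ((x : ℕ) : ℝ) * (1 - p) := by
    intro x b₁ b₂
    calc _ = (((b₁ : ℕ) : ℝ) + ((x : ℕ) : ℝ) - ((b₂ : ℕ) : ℝ) - ((k - (x : ℕ) : ℕ) : ℝ) * p)
          + (-1) * (((x : ℕ) : ℝ) * (1 - p)) := by
            rw [← step1 (1 - p) _ (-1) (x : ℕ)]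
            exact Finset.sum_congr rfl fun c _ => by ring
      _ = _ := by ring
  have hb₂ : ∀ (x b₁ : Fin (k + 1)),
      (∑ b₂ : Fin (k + 1), w p k (b₂ : ℕ) *
        (((b₁ : ℕ) : ℝ) + ((x : ℕ) : ℝ) - ((b₂ : ℕ) : ℝ)
          - ((k - (x : ℕ) : ℕ) : ℝ) * p - ((x : ℕ) : ℝ) * (1 - p)))
      = ((b₁ : ℕ) : ℝ) + ((x : ℕ) : ℝ)
          - ((k - (x : ℕ) : ℕ) : ℝ) * p - ((x : ℕ) : ℝ) * (1 - p) - k * p := by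
    intro x b₁
    calc _ = (((b₁ : ℕ) : ℝ) + ((x : ℕ) : ℝ) - ((k - (x : ℕ) : ℕ) : ℝ) * p
          - ((x : ℕ) : ℝ) * (1 - p)) + (-1) * ((k : ℝ) * p) := by
            rw [← step1 p _ (-1) k]
            exact Finset.sum_congr rfl fun b₂ _ => by ring
      _ = _ := by ring
  have hb₁ : ∀ (x : Fin (k + 1)),
      (∑ b₁ : Fin (k + 1), w p k (b₁ : ℕ) *
        (((b₁ : ℕ) : ℝ) + ((x : ℕ) : ℝ)
          - ((k - (x : ℕ) : ℕ) : ℝ) * p - ((x : ℕ) : ℝ) * (1 - p) - k * p))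
      = ((x : ℕ) : ℝ) - ((k - (x : ℕ) : ℕ) : ℝ) * p - ((x : ℕ) : ℝ) * (1 - p) := by
    intro x
    calc _ = (((x : ℕ) : ℝ) - ((k - (x : ℕ) : ℕ) : ℝ) * p - ((x : ℕ) : ℝ) * (1 - p)
          - k * p) + 1 * ((k : ℝ) * p) := by
            rw [← step1 p _ 1 k]
            exact Finset.sum_congr rfl fun b₁ _ => by ring
      _ = _ := by ring
  simp only [hd, hc, hb₂, hb₁]
  calc (∑ x : Fin (k + 1), w p k (x : ℕ) *
        (((x : ℕ) : ℝ) - ((k - (x : ℕ) : ℕ) : ℝ) * p - ((x : ℕ) : ℝ) * (1 - p)))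
      = -(k * p) + 2 * p * (k * p) := by
        rw [← step1 p (-(k * p)) (2 * p) k]
        refine Finset.sum_congr rfl fun x _ => ?_
        rw [Nat.cast_sub (Nat.lt_succ_iff.mp x.isLt)]
        ring
    _ = k * p * (2 * p - 1) := by ring

lemma E2calc (k : ℕ) (p : ℝ) :
    (∑ x : Fin (k + 1), w p k (x : ℕ) *
     ∑ b₁ : Fin (k + 1), w p k (b₁ : ℕ) *
     ∑ b₂ : Fin (k + 1), w p k (b₂ : ℕ) *
     ∑ c : Fin ((x : ℕ) + 1), w (1 - p) (x : ℕ) (c : ℕ) *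
     ∑ d : Fin (k - (x : ℕ) + 1), w p (k - (x : ℕ)) (d : ℕ) *
       ((((b₁ : ℕ) + (x : ℕ) : ℕ) : ℝ) - (((b₂ : ℕ) + (c : ℕ) + (d : ℕ) : ℕ) : ℝ)) ^ 2)
      = (k * p * (2 * p - 1)) ^ 2 + k * p * (1 - p) * (3 + 4 * p ^ 2) := by
  have hd : ∀ (x b₁ b₂ : Fin (k + 1)) (c : Fin ((x : ℕ) + 1)),
      (∑ d : Fin (k - (x : ℕ) + 1), w p (k - (x : ℕ)) (d : ℕ) *
        ((((b₁ : ℕ) + (x : ℕ) : ℕ) : ℝ) - (((b₂ : ℕ) + (c : ℕ) + (d : ℕ) : ℕ) : ℝ)) ^ 2)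
      = (((b₁ : ℕ) : ℝ) + ((x : ℕ) : ℝ) - ((b₂ : ℕ) : ℝ) - ((c : ℕ) : ℝ)
          - ((k - (x : ℕ) : ℕ) : ℝ) * p) ^ 2
        + ((k - (x : ℕ) : ℕ) : ℝ) * p * (1 - p) := by
    intro x b₁ b₂ c
    calc _ = ((((b₁ : ℕ) : ℝ) + ((x : ℕ) : ℝ) - ((b₂ : ℕ) : ℝ) - ((c : ℕ) : ℝ))
          + (-1) * (((k - (x : ℕ) : ℕ) : ℝ) * p)) ^ 2
          + (-1 : ℝ) ^ 2 * (((k - (x : ℕ) : ℕ) : ℝ) * p * (1 - p)) := by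
            rw [← step2 p _ (-1) (k - (x : ℕ))]
            exact Finset.sum_congr rfl fun d _ => by push_cast; ring
      _ = _ := by ring
  have hc : ∀ (x b₁ b₂ : Fin (k + 1)),
      (∑ c : Fin ((x : ℕ) + 1), w (1 - p) (x : ℕ) (c : ℕ) *
        ((((b₁ : ℕ) : ℝ) + ((x : ℕ) : ℝ) - ((b₂ : ℕ) : ℝ) - ((c : ℕ) : ℝ)
          - ((k - (x : ℕ) : ℕ) : ℝ) * p) ^ 2
        + ((k - (x : ℕ) : ℕ) : ℝ) * p * (1 - p)))
      = (((b₁ : ℕ) : ℝ) + ((x : ℕ) : ℝ) - ((b₂ : ℕ) : ℝ)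
          - ((k - (x : ℕ) : ℕ) : ℝ) * p - ((x : ℕ) : ℝ) * (1 - p)) ^ 2
        + ((x : ℕ) : ℝ) * (1 - p) * p + ((k - (x : ℕ) : ℕ) : ℝ) * p * (1 - p) := by
    intro x b₁ b₂
    calc _ = ((((b₁ : ℕ) : ℝ) + ((x : ℕ) : ℝ) - ((b₂ : ℕ) : ℝ)
          - ((k - (x : ℕ) : ℕ) : ℝ) * p) + (-1) * (((x : ℕ) : ℝ) * (1 - p))) ^ 2
          + (-1 : ℝ) ^ 2 * (((x : ℕ) : ℝ) * (1 - p) * (1 - (1 - p)))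
          + ((k - (x : ℕ) : ℕ) : ℝ) * p * (1 - p) := by
            rw [← step2' (1 - p) _ (-1) (((k - (x : ℕ) : ℕ) : ℝ) * p * (1 - p)) (x : ℕ)]
            exact Finset.sum_congr rfl fun c _ => by ring
      _ = _ := by ring
  have hb₂ : ∀ (x b₁ : Fin (k + 1)),
      (∑ b₂ : Fin (k + 1), w p k (b₂ : ℕ) *
        ((((b₁ : ℕ) : ℝ) + ((x : ℕ) : ℝ) - ((b₂ : ℕ) : ℝ)
          - ((k - (x : ℕ) : ℕ) : ℝ) * p - ((x : ℕ) : ℝ) * (1 - p)) ^ 2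
        + ((x : ℕ) : ℝ) * (1 - p) * p + ((k - (x : ℕ) : ℕ) : ℝ) * p * (1 - p)))
      = (((b₁ : ℕ) : ℝ) + ((x : ℕ) : ℝ)
          - ((k - (x : ℕ) : ℕ) : ℝ) * p - ((x : ℕ) : ℝ) * (1 - p) - k * p) ^ 2
        + k * p * (1 - p)
        + ((x : ℕ) : ℝ) * (1 - p) * p + ((k - (x : ℕ) : ℕ) : ℝ) * p * (1 - p) := by
    intro x b₁
    calc _ = ((((b₁ : ℕ) : ℝ) + ((x : ℕ) : ℝ) - ((k - (x : ℕ) : ℕ) : ℝ) * p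
          - ((x : ℕ) : ℝ) * (1 - p)) + (-1) * ((k : ℝ) * p)) ^ 2
          + (-1 : ℝ) ^ 2 * ((k : ℝ) * p * (1 - p))
          + (((x : ℕ) : ℝ) * (1 - p) * p + ((k - (x : ℕ) : ℕ) : ℝ) * p * (1 - p)) := by
            rw [← step2' p _ (-1)
              (((x : ℕ) : ℝ) * (1 - p) * p + ((k - (x : ℕ) : ℕ) : ℝ) * p * (1 - p)) k]
            exact Finset.sum_congr rfl fun b₂ _ => by ring
      _ = _ := by ring
  have hb₁ : ∀ (x : Fin (k + 1)),
      (∑ b₁ : Fin (k + 1), w p k (b₁ : ℕ) *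
        ((((b₁ : ℕ) : ℝ) + ((x : ℕ) : ℝ)
          - ((k - (x : ℕ) : ℕ) : ℝ) * p - ((x : ℕ) : ℝ) * (1 - p) - k * p) ^ 2
        + k * p * (1 - p)
        + ((x : ℕ) : ℝ) * (1 - p) * p + ((k - (x : ℕ) : ℕ) : ℝ) * p * (1 - p)))
      = (((x : ℕ) : ℝ) - ((k - (x : ℕ) : ℕ) : ℝ) * p - ((x : ℕ) : ℝ) * (1 - p)) ^ 2
        + 2 * (k : ℝ) * p * (1 - p)
        + ((x : ℕ) : ℝ) * (1 - p) * p + ((k - (x : ℕ) : ℕ) : ℝ) * p * (1 - p) := by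
    intro x
    calc _ = ((((x : ℕ) : ℝ) - ((k - (x : ℕ) : ℕ) : ℝ) * p - ((x : ℕ) : ℝ) * (1 - p)
          - k * p) + 1 * ((k : ℝ) * p)) ^ 2
          + (1 : ℝ) ^ 2 * ((k : ℝ) * p * (1 - p))
          + (k * p * (1 - p)
            + ((x : ℕ) : ℝ) * (1 - p) * p + ((k - (x : ℕ) : ℕ) : ℝ) * p * (1 - p)) := by
            rw [← step2' p _ 1
              (k * p * (1 - p)
                + ((x : ℕ) : ℝ) * (1 - p) * p + ((k - (x : ℕ) : ℕ) : ℝ) * p * (1 - p)) k]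
            exact Finset.sum_congr rfl fun b₁ _ => by ring
      _ = _ := by ring
  simp only [hd, hc, hb₂, hb₁]
  calc (∑ x : Fin (k + 1), w p k (x : ℕ) *
        ((((x : ℕ) : ℝ) - ((k - (x : ℕ) : ℕ) : ℝ) * p - ((x : ℕ) : ℝ) * (1 - p)) ^ 2
          + 2 * (k : ℝ) * p * (1 - p)
          + ((x : ℕ) : ℝ) * (1 - p) * p + ((k - (x : ℕ) : ℕ) : ℝ) * p * (1 - p)))
      = (-(k * p) + 2 * p * (k * p)) ^ 2 + (2 * p) ^ 2 * ((k : ℝ) * p * (1 - p))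
          + 3 * (k : ℝ) * p * (1 - p) := by
        rw [← step2' p (-(k * p)) (2 * p) (3 * (k : ℝ) * p * (1 - p)) k]
        refine Finset.sum_congr rfl fun x _ => ?_
        rw [Nat.cast_sub (Nat.lt_succ_iff.mp x.isLt)]
        ring
    _ = _ := by ring

/-- In the noisy ordered pairwise comparison model with parameters
`k ∈ ℕ` and `p ∈ [0, 1]`, the variance of `S = X_i − X_j` equals
`kp(1 − p)(3 + 4p²)`. -/
theorem variance_S (k : ℕ) (p : ℝ) (hp0 : 0 ≤ p) (hp1 : p ≤ 1) :
    variance (fun ω : ℕ × ℕ => ((ω.1 : ℕ) : ℝ) - ((ω.2 : ℕ) : ℝ))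
        (noisyPair k p hp0 hp1).toMeasure
      = k * p * (1 - p) * (3 + 4 * p ^ 2) := by
  have hφ : Measurable (phi k) := measurable_from_top
  have hX : Measurable (fun ω : ℕ × ℕ => ((ω.1 : ℕ) : ℝ) - ((ω.2 : ℕ) : ℝ)) :=
    measurable_of_countable _
  rw [noisy_eq, ← PMF.toMeasure_map (f := phi k) (Pk k p hp1) hφ, variance_map' _ _ _ hφ hX,
    variance_eq_sub (memL2_of_finite _ _)]
  have h1p : ((1 - Real.toNNReal p : NNReal) : ℝ) = 1 - p := by
    rw [NNReal.coe_sub (Real.toNNReal_le_one.mpr hp1)]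
    simp [hp0]
  have e2 := exp_Pk k p hp1 (((fun ω : ℕ × ℕ => ((ω.1 : ℕ) : ℝ) - ((ω.2 : ℕ) : ℝ)) ∘ phi k) ^ 2)
  have e1 := exp_Pk k p hp1 ((fun ω : ℕ × ℕ => ((ω.1 : ℕ) : ℝ) - ((ω.2 : ℕ) : ℝ)) ∘ phi k)
  simp only [binomial_toReal, Real.coe_toNNReal p hp0, h1p, Pi.pow_apply,
    Function.comp_apply, phi] at e1 e2
  rw [show (MeasureTheory.integral (Pk k p hp1).toMeasure
      (((fun ω : ℕ × ℕ => ((ω.1 : ℕ) : ℝ) - ((ω.2 : ℕ) : ℝ)) ∘ phi k) ^ 2)) = _ from e2,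
    show (MeasureTheory.integral (Pk k p hp1).toMeasure
      ((fun ω : ℕ × ℕ => ((ω.1 : ℕ) : ℝ) - ((ω.2 : ℕ) : ℝ)) ∘ phi k)) = _ from e1,
    E1calc, E2calc]
  ring
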